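/- arXiv:1111.1950 — 4 statements merged into one kernel-verified Lean document; each statement's English description precedes it below -/
import Mathlib

section
/- For every real μ with 0 < μ < 1 and every real c > 0, the improper integral lim_{R→∞} ∫₀^R ξ^{μ−1}·cos(cξ) dξ exists and equals Γ(μ)·cos(πμ/2)·c^{−μ}. -/
open Real Filter intervalIntegral

section MCAux
open MeasureTheory Set


namespace MC
open MeasureTheory Set

/-- kernel identity -/
lemma kernel {μ t : ℝ} (hμ1 : μ < 1) (ht : 0 < t) :
    ∫ s in Ioi (0:ℝ), s ^ (-μ) * rexp (-(t * s)) = Real.Gamma (1 - μ) * t ^ (μ - 1) := by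
  have h := integral_rpow_mul_exp_neg_mul_Ioi (a := 1 - μ) (r := t) (by linarith) ht
  rw [show (1:ℝ) - μ - 1 = -μ by ring] at h
  rw [h, one_div, ← Real.rpow_neg_one, ← Real.rpow_mul ht.le]
  rw [show (-1) * (1 - μ) = μ - 1 by ring, mul_comm]

/-- antiderivative of exp * cos -/
lemma expcos_hasDerivAt (s c t : ℝ) :
    HasDerivAt (fun t : ℝ => rexp (-(s * t)) * (c * Real.sin (c * t) - s * Real.cos (c * t)) / (s ^ 2 + c ^ 2))
      (rexp (-(s * t)) * Real.cos (c * t) * (s ^ 2 + c ^ 2) / (s ^ 2 + c ^ 2)) t := by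
  have h1 : HasDerivAt (fun t : ℝ => rexp (-(s * t))) (rexp (-(s * t)) * (-s)) t := by
    simpa using ((hasDerivAt_id t).const_mul (-s)).exp.congr_deriv (by simp [mul_comm])
  have h2 : HasDerivAt (fun t : ℝ => Real.sin (c * t)) (Real.cos (c * t) * c) t := by
    simpa using ((hasDerivAt_id t).const_mul c).sin.congr_deriv (by simp)
  have h3 : HasDerivAt (fun t : ℝ => Real.cos (c * t)) (-Real.sin (c * t) * c) t := by
    simpa using ((hasDerivAt_id t).const_mul c).cos.congr_deriv (by simp)
  have := ((h1.mul ((h2.const_mul c).sub (h3.const_mul s))).div_const (s ^ 2 + c ^ 2))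
  exact this.congr_deriv (by simp only [Pi.sub_apply]; ring)

end MC

namespace MC
open MeasureTheory Set

lemma expcos_integral {s c : ℝ} (h : 0 < s ^ 2 + c ^ 2) (R : ℝ) :
    ∫ t in (0:ℝ)..R, rexp (-(s * t)) * Real.cos (c * t)
      = (rexp (-(s * R)) * (c * Real.sin (c * R) - s * Real.cos (c * R)) + s) / (s ^ 2 + c ^ 2) := by
  have key : ∀ t ∈ uIcc (0:ℝ) R,
      HasDerivAt (fun t : ℝ => rexp (-(s * t)) * (c * Real.sin (c * t) - s * Real.cos (c * t)) / (s ^ 2 + c ^ 2))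
        (rexp (-(s * t)) * Real.cos (c * t)) t := fun t _ =>
    (expcos_hasDerivAt s c t).congr_deriv (by field_simp)
  have hint : IntervalIntegrable (fun t : ℝ => rexp (-(s * t)) * Real.cos (c * t)) volume 0 R :=
    (Continuous.mul (by fun_prop) (by fun_prop)).intervalIntegrable _ _
  rw [intervalIntegral.integral_eq_sub_of_hasDerivAt key hint]
  simp
  ring

end MC

namespace MC
open MeasureTheory Set

lemma int_rpow_exp {q b : ℝ} (hq : -1 < q) (hb : 0 < b) :
    IntegrableOn (fun s : ℝ => s ^ q * rexp (-(b * s))) (Ioi 0) := by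
  have := integrableOn_rpow_mul_exp_neg_mul_rpow hq one_pos hb (p := 1)
  simpa [Real.rpow_one, neg_mul] using this

lemma int_main {ν c : ℝ} (hν : 0 < ν) (hν1 : ν < 2) (hc : 0 < c) :
    IntegrableOn (fun s : ℝ => s ^ (ν - 1) / (s ^ 2 + c ^ 2)) (Ioi 0) := by
  have hunion : Ioc (0:ℝ) 1 ∪ Ioi 1 = Ioi 0 := Ioc_union_Ioi_eq_Ioi zero_le_one
  rw [← hunion]
  apply IntegrableOn.union
  · -- on (0,1]: bound by s ^ (ν-1) / c^2
    have hbase : IntegrableOn (fun s : ℝ => s ^ (ν - 1) / c ^ 2) (Ioc 0 1) := by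
      apply Integrable.div_const
      have h2 : IntervalIntegrable (fun x : ℝ => x ^ (ν - 1)) volume 0 1 :=
        intervalIntegrable_rpow' (by linarith)
      exact (intervalIntegrable_iff_integrableOn_Ioc_of_le zero_le_one).1 h2
    apply hbase.mono' ((by fun_prop : Measurable fun s : ℝ =>
      s ^ (ν - 1) / (s ^ 2 + c ^ 2)).aestronglyMeasurable)
    filter_upwards [ae_restrict_mem measurableSet_Ioc] with s hs
    obtain ⟨hs0, hs1⟩ := hs
    rw [Real.norm_of_nonneg (by positivity)]
    apply div_le_div_of_nonneg_left (by positivity) (by positivity)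
    nlinarith [sq_nonneg s]
  · -- on (1,∞): bound by s ^ (ν - 3)
    have hbase := integrableOn_Ioi_rpow_of_lt (a := ν - 3) (by linarith) one_pos
    apply hbase.mono' ((by fun_prop : Measurable fun s : ℝ =>
      s ^ (ν - 1) / (s ^ 2 + c ^ 2)).aestronglyMeasurable)
    filter_upwards [ae_restrict_mem measurableSet_Ioi] with s hs
    rw [mem_Ioi] at hs
    have hs0 : (0:ℝ) < s := lt_trans one_pos hs
    rw [Real.norm_of_nonneg (by positivity)]
    have h1 : s ^ (ν - 1) / (s ^ 2 + c ^ 2) ≤ s ^ (ν - 1) / s ^ 2 := by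
      apply div_le_div_of_nonneg_left (by positivity) (by positivity)
      nlinarith
    refine h1.trans ?_
    rw [← Real.rpow_two, ← Real.rpow_sub hs0]
    norm_num
    ring_nf
    exact le_rfl

lemma exp_int {b : ℝ} (hb : 0 < b) :
    ∫ y in Ioi (0:ℝ), rexp (-(b * y)) = 1 / b := by
  have h := integral_rpow_mul_exp_neg_mul_Ioi (a := 1) (r := b) one_pos hb
  simpa using h

lemma main_value {μ c : ℝ} (hμ0 : 0 < μ) (hμ1 : μ < 1) (hc : 0 < c) :
    ∫ s in Ioi (0:ℝ), s ^ (1 - μ) / (s ^ 2 + c ^ 2)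
      = 1 / 2 * Real.Gamma (1 - μ / 2) * Real.Gamma (μ / 2) * c ^ (-μ) := by
  have hpos : ∀ s : ℝ, 0 < s ^ 2 + c ^ 2 := fun s => by positivity
  have hmeas : AEStronglyMeasurable
      (Function.uncurry fun s y : ℝ => s ^ (1 - μ) * rexp (-((s ^ 2 + c ^ 2) * y)))
      ((volume.restrict (Ioi (0:ℝ))).prod (volume.restrict (Ioi (0:ℝ)))) := by
    apply Measurable.aestronglyMeasurable
    fun_prop
  have hslice : ∀ s : ℝ,
      Integrable (fun y => s ^ (1 - μ) * rexp (-((s ^ 2 + c ^ 2) * y)))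
        (volume.restrict (Ioi 0)) := by
    intro s
    have h2 := (exp_neg_integrableOn_Ioi 0 (hpos s)).const_mul (s ^ (1 - μ))
    simp only [neg_mul] at h2
    exact h2
  have hnormint : ∀ s ∈ Ioi (0:ℝ),
      (∫ y in Ioi (0:ℝ), ‖s ^ (1 - μ) * rexp (-((s ^ 2 + c ^ 2) * y))‖)
        = s ^ (1 - μ) / (s ^ 2 + c ^ 2) := by
    intro s hs
    rw [mem_Ioi] at hs
    have h1 : ∀ y : ℝ, ‖s ^ (1 - μ) * rexp (-((s ^ 2 + c ^ 2) * y))‖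
        = s ^ (1 - μ) * rexp (-((s ^ 2 + c ^ 2) * y)) := fun y =>
      Real.norm_of_nonneg (by positivity)
    simp_rw [h1]
    rw [MeasureTheory.integral_const_mul, exp_int (hpos s), mul_one_div]
  have hint : Integrable
      (Function.uncurry fun s y : ℝ => s ^ (1 - μ) * rexp (-((s ^ 2 + c ^ 2) * y)))
      ((volume.restrict (Ioi (0:ℝ))).prod (volume.restrict (Ioi (0:ℝ)))) := by
    rw [MeasureTheory.integrable_prod_iff hmeas]
    refine ⟨Eventually.of_forall fun s => hslice s, ?_⟩
    apply Integrable.mono' (g := fun s : ℝ => s ^ (2 - μ - 1) / (s ^ 2 + c ^ 2))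
      (int_main (ν := 2 - μ) (by linarith) (by linarith) hc)
      (hmeas.norm.integral_prod_right')
    filter_upwards [ae_restrict_mem measurableSet_Ioi] with s hs
    simp only [Function.uncurry_apply_pair]
    rw [Real.norm_of_nonneg (integral_nonneg fun y => norm_nonneg _), hnormint s hs,
      show (2:ℝ) - μ - 1 = 1 - μ by ring]
  have hswap := MeasureTheory.integral_integral_swap
    (f := fun s y : ℝ => s ^ (1 - μ) * rexp (-((s ^ 2 + c ^ 2) * y))) hint
  have hG2 : (0:ℝ) < c ^ 2 := by positivity
  calc ∫ s in Ioi (0:ℝ), s ^ (1 - μ) / (s ^ 2 + c ^ 2)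
      = ∫ s in Ioi (0:ℝ), ∫ y in Ioi (0:ℝ), s ^ (1 - μ) * rexp (-((s ^ 2 + c ^ 2) * y)) := by
        refine (setIntegral_congr_fun measurableSet_Ioi fun s hs => ?_).symm
        rw [MeasureTheory.integral_const_mul, exp_int (hpos s), mul_one_div]
    _ = ∫ y in Ioi (0:ℝ), ∫ s in Ioi (0:ℝ), s ^ (1 - μ) * rexp (-((s ^ 2 + c ^ 2) * y)) := hswap
    _ = ∫ y in Ioi (0:ℝ), rexp (-(c ^ 2 * y)) *
          (y ^ (-(1 - μ + 1) / 2) * (1 / 2) * Real.Gamma ((1 - μ + 1) / 2)) := by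
        refine setIntegral_congr_fun measurableSet_Ioi fun y hy => ?_
        rw [mem_Ioi] at hy
        rw [← integral_rpow_mul_exp_neg_mul_rpow two_pos (by linarith : (-1:ℝ) < 1 - μ) hy,
          ← MeasureTheory.integral_const_mul]
        refine setIntegral_congr_fun measurableSet_Ioi fun s hs => ?_
        rw [Real.rpow_two, show -((s ^ 2 + c ^ 2) * y) = -y * s ^ 2 + -(c ^ 2 * y) by ring,
          Real.exp_add]
        ring
    _ = 1 / 2 * Real.Gamma (1 - μ / 2) *
          ∫ y in Ioi (0:ℝ), y ^ (μ / 2 - 1) * rexp (-(c ^ 2 * y)) := by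
        rw [← MeasureTheory.integral_const_mul]
        refine setIntegral_congr_fun measurableSet_Ioi fun y hy => ?_
        rw [show -(1 - μ + 1) / 2 = μ / 2 - 1 by ring, show (1 - μ + 1) / 2 = 1 - μ / 2 by ring]
        ring
    _ = 1 / 2 * Real.Gamma (1 - μ / 2) * Real.Gamma (μ / 2) * c ^ (-μ) := by
        rw [integral_rpow_mul_exp_neg_mul_Ioi (by positivity : (0:ℝ) < μ / 2) hG2]
        have hcp : ((1:ℝ) / c ^ 2) ^ (μ / 2) = c ^ (-μ) := by
          rw [show (1:ℝ) / c ^ 2 = c ^ ((-2):ℝ) by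
            rw [Real.rpow_neg hc.le, one_div, Real.rpow_two],
            ← Real.rpow_mul hc.le, show (-2) * (μ / 2) = -μ by ring]
        rw [hcp]
        ring

lemma IR_eq {μ c : ℝ} (hμ0 : 0 < μ) (hμ1 : μ < 1) (hc : 0 < c) {R : ℝ} (hR : 0 ≤ R) :
    ∫ t in (0:ℝ)..R, t ^ (μ - 1) * Real.cos (c * t)
      = (Real.Gamma (1 - μ))⁻¹ * ∫ s in Ioi (0:ℝ), s ^ (-μ) *
          ((rexp (-(s * R)) * (c * Real.sin (c * R) - s * Real.cos (c * R)) + s)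
            / (s ^ 2 + c ^ 2)) := by
  have hG : 0 < Real.Gamma (1 - μ) := Real.Gamma_pos_of_pos (by linarith)
  have hpos : ∀ s : ℝ, 0 < s ^ 2 + c ^ 2 := fun s => by positivity
  have hmeas : AEStronglyMeasurable
      (Function.uncurry fun t s : ℝ => s ^ (-μ) * rexp (-(t * s)) * Real.cos (c * t))
      ((volume.restrict (Ioc 0 R)).prod (volume.restrict (Ioi (0:ℝ)))) :=
    Measurable.aestronglyMeasurable (by fun_prop)
  have hslice : ∀ t ∈ Ioc (0:ℝ) R,
      Integrable (fun s => s ^ (-μ) * rexp (-(t * s)) * Real.cos (c * t))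
        (volume.restrict (Ioi 0)) := fun t ht =>
    (int_rpow_exp (by linarith : (-1:ℝ) < -μ) ht.1).mul_const _
  have hnorm : ∀ t ∈ Ioc (0:ℝ) R,
      (∫ s in Ioi (0:ℝ), ‖s ^ (-μ) * rexp (-(t * s)) * Real.cos (c * t)‖)
        ≤ Real.Gamma (1 - μ) * t ^ (μ - 1) := by
    intro t ht
    rw [← kernel hμ1 ht.1]
    apply integral_mono_of_nonneg (Eventually.of_forall fun s => norm_nonneg _)
      (int_rpow_exp (by linarith) ht.1)
    filter_upwards [ae_restrict_mem measurableSet_Ioi] with s hs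
    rw [mem_Ioi] at hs
    rw [norm_mul, norm_mul, Real.norm_of_nonneg (by positivity : (0:ℝ) ≤ s ^ (-μ)),
      Real.norm_of_nonneg (Real.exp_nonneg _)]
    have h2 : ‖Real.cos (c * t)‖ ≤ 1 := by
      rw [Real.norm_eq_abs]; exact Real.abs_cos_le_one _
    calc s ^ (-μ) * rexp (-(t * s)) * ‖Real.cos (c * t)‖
        ≤ s ^ (-μ) * rexp (-(t * s)) * 1 := by
          apply mul_le_mul_of_nonneg_left h2 (by positivity)
      _ = s ^ (-μ) * rexp (-(t * s)) := by ring
  have hint : Integrable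
      (Function.uncurry fun t s : ℝ => s ^ (-μ) * rexp (-(t * s)) * Real.cos (c * t))
      ((volume.restrict (Ioc 0 R)).prod (volume.restrict (Ioi (0:ℝ)))) := by
    rw [MeasureTheory.integrable_prod_iff hmeas]
    constructor
    · filter_upwards [ae_restrict_mem measurableSet_Ioc] with t ht
      exact hslice t ht
    · have hbase : IntegrableOn (fun t : ℝ => Real.Gamma (1 - μ) * t ^ (μ - 1)) (Ioc 0 R) := by
        have h2 : IntervalIntegrable (fun x : ℝ => x ^ (μ - 1)) volume 0 R :=
          intervalIntegrable_rpow' (by linarith)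
        have h3 := h2.const_mul (Real.Gamma (1 - μ))
        rwa [intervalIntegrable_iff_integrableOn_Ioc_of_le hR] at h3
      apply hbase.mono' (hmeas.norm.integral_prod_right')
      filter_upwards [ae_restrict_mem measurableSet_Ioc] with t ht
      simp only [Function.uncurry_apply_pair]
      rw [Real.norm_of_nonneg (integral_nonneg fun s => norm_nonneg _)]
      exact hnorm t ht
  have hswap := MeasureTheory.integral_integral_swap hint
  calc ∫ t in (0:ℝ)..R, t ^ (μ - 1) * Real.cos (c * t)
      = ∫ t in Ioc (0:ℝ) R, t ^ (μ - 1) * Real.cos (c * t) := intervalIntegral.integral_of_le hR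
    _ = ∫ t in Ioc (0:ℝ) R, (Real.Gamma (1 - μ))⁻¹ *
          ∫ s in Ioi (0:ℝ), s ^ (-μ) * rexp (-(t * s)) * Real.cos (c * t) := by
        refine setIntegral_congr_fun measurableSet_Ioc fun t ht => ?_
        rw [MeasureTheory.integral_mul_const, kernel hμ1 ht.1]
        field_simp
    _ = (Real.Gamma (1 - μ))⁻¹ * ∫ t in Ioc (0:ℝ) R,
          ∫ s in Ioi (0:ℝ), s ^ (-μ) * rexp (-(t * s)) * Real.cos (c * t) :=
        MeasureTheory.integral_const_mul _ _
    _ = (Real.Gamma (1 - μ))⁻¹ * ∫ s in Ioi (0:ℝ),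
          ∫ t in Ioc (0:ℝ) R, s ^ (-μ) * rexp (-(t * s)) * Real.cos (c * t) := by rw [hswap]
    _ = (Real.Gamma (1 - μ))⁻¹ * ∫ s in Ioi (0:ℝ), s ^ (-μ) *
          ((rexp (-(s * R)) * (c * Real.sin (c * R) - s * Real.cos (c * R)) + s)
            / (s ^ 2 + c ^ 2)) := by
        congr 1
        refine setIntegral_congr_fun measurableSet_Ioi fun s hs => ?_
        simp_rw [mul_assoc, MeasureTheory.integral_const_mul]
        congr 1
        rw [← intervalIntegral.integral_of_le hR, ← expcos_integral (hpos s) R]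
        refine intervalIntegral.integral_congr fun t ht => ?_
        rw [mul_comm t s]

lemma tends {μ c : ℝ} (hμ0 : 0 < μ) (hμ1 : μ < 1) (hc : 0 < c) :
    Tendsto (fun R : ℝ => ∫ s in Ioi (0:ℝ), s ^ (-μ) *
        ((rexp (-(s * R)) * (c * Real.sin (c * R) - s * Real.cos (c * R)) + s)
          / (s ^ 2 + c ^ 2))) atTop
      (nhds (∫ s in Ioi (0:ℝ), s ^ (-μ) * (s / (s ^ 2 + c ^ 2)))) := by
  have hpos : ∀ s : ℝ, 0 < s ^ 2 + c ^ 2 := fun s => by positivity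
  apply MeasureTheory.tendsto_integral_filter_of_dominated_convergence
    (bound := fun s : ℝ => s ^ (-μ) * (s / (s ^ 2 + c ^ 2)) + 2 / c * (s ^ (-μ) * rexp (-s)))
  · exact Eventually.of_forall fun R => Measurable.aestronglyMeasurable (by fun_prop)
  · filter_upwards [Ici_mem_atTop (1:ℝ)] with R hR
    rw [mem_Ici] at hR
    filter_upwards [ae_restrict_mem measurableSet_Ioi] with s hs
    rw [mem_Ioi] at hs
    have h2 : rexp (-(s * R)) ≤ rexp (-s) := Real.exp_le_exp.2 (by nlinarith)
    have hA : |rexp (-(s * R)) * (c * Real.sin (c * R) - s * Real.cos (c * R))|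
        ≤ rexp (-s) * (c + s) := by
      rw [abs_mul, abs_of_nonneg (Real.exp_nonneg _)]
      apply mul_le_mul h2 ?_ (abs_nonneg _) (Real.exp_nonneg _)
      rw [abs_le]
      constructor <;>
        nlinarith [Real.neg_one_le_sin (c * R), Real.sin_le_one (c * R),
          Real.neg_one_le_cos (c * R), Real.cos_le_one (c * R)]
    have h3 : (c + s) / (s ^ 2 + c ^ 2) ≤ 2 / c := by
      rw [div_le_div_iff₀ (hpos s) hc]
      nlinarith [sq_nonneg (s - c), sq_nonneg s, sq_nonneg c]
    have hu : (0:ℝ) ≤ s ^ (-μ) := by positivity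
    rw [Real.norm_eq_abs, abs_mul, abs_of_nonneg hu, abs_div,
      abs_of_nonneg (hpos s).le]
    calc s ^ (-μ) * (|rexp (-(s * R)) * (c * Real.sin (c * R) - s * Real.cos (c * R)) + s|
            / (s ^ 2 + c ^ 2))
        ≤ s ^ (-μ) * ((rexp (-s) * (c + s) + s) / (s ^ 2 + c ^ 2)) := by
          gcongr
          exact (abs_add_le _ _).trans (by rw [abs_of_nonneg hs.le]; gcongr)
      _ = s ^ (-μ) * (s / (s ^ 2 + c ^ 2))
            + s ^ (-μ) * ((c + s) / (s ^ 2 + c ^ 2) * rexp (-s)) := by ring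
      _ ≤ s ^ (-μ) * (s / (s ^ 2 + c ^ 2)) + s ^ (-μ) * (2 / c * rexp (-s)) := by
          gcongr
      _ = s ^ (-μ) * (s / (s ^ 2 + c ^ 2)) + 2 / c * (s ^ (-μ) * rexp (-s)) := by ring
  · apply Integrable.add
    · apply (int_main (ν := 2 - μ) (by linarith) (by linarith) hc).congr_fun ?_ measurableSet_Ioi
      intro s hs
      rw [mem_Ioi] at hs
      dsimp only
      rw [show (2:ℝ) - μ - 1 = 1 + -μ by ring, Real.rpow_add hs, Real.rpow_one]
      ring
    · have h4 := (int_rpow_exp (by linarith : (-1:ℝ) < -μ) one_pos).const_mul (2 / c)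
      simpa [one_mul] using h4
  · filter_upwards [ae_restrict_mem measurableSet_Ioi] with s hs
    rw [mem_Ioi] at hs
    have hexp : Tendsto (fun R : ℝ => rexp (-(s * R))) atTop (nhds 0) := by
      have h5 : Tendsto (fun R : ℝ => -(s * R)) atTop atBot :=
        tendsto_neg_atTop_atBot.comp (Tendsto.const_mul_atTop hs tendsto_id)
      exact Real.tendsto_exp_atBot.comp h5
    have hosc : Tendsto (fun R : ℝ =>
        rexp (-(s * R)) * (c * Real.sin (c * R) - s * Real.cos (c * R))) atTop (nhds 0) := by
      apply squeeze_zero_norm (a := fun R => rexp (-(s * R)) * (c + s))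
      · intro R
        rw [Real.norm_eq_abs, abs_mul, abs_of_nonneg (Real.exp_nonneg _)]
        apply mul_le_mul_of_nonneg_left ?_ (Real.exp_nonneg _)
        rw [abs_le]
        constructor <;>
          nlinarith [Real.neg_one_le_sin (c * R), Real.sin_le_one (c * R),
            Real.neg_one_le_cos (c * R), Real.cos_le_one (c * R)]
      · simpa using hexp.mul_const (c + s)
    have h6 := ((hosc.add (tendsto_const_nhds (x := s))).div_const
      (s ^ 2 + c ^ 2)).const_mul (s ^ (-μ))
    simpa using h6


end MC


end MCAux

open MeasureTheory in
/-- For `0 < μ < 1` and `c > 0`, `lim_{R→∞} ∫₀^R ξ^(μ-1) cos (cξ) dξ = Γ(μ) cos (πμ/2) c^(-μ)`. -/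
theorem mellin_cos (μ c : ℝ) (hμ0 : 0 < μ) (hμ1 : μ < 1) (hc : 0 < c) :
    Tendsto (fun R : ℝ => ∫ ξ in (0:ℝ)..R, ξ ^ (μ - 1) * Real.cos (c * ξ)) atTop
      (nhds (Real.Gamma μ * Real.cos (π * μ / 2) * c ^ (-μ))) := by
  have hG : 0 < Real.Gamma (1 - μ) := Real.Gamma_pos_of_pos (by linarith)
  have hs1 : 0 < Real.sin (π * μ / 2) :=
    Real.sin_pos_of_pos_of_lt_pi (by nlinarith [pi_pos]) (by nlinarith [pi_pos])
  have hc1 : 0 < Real.cos (π * μ / 2) :=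
    Real.cos_pos_of_mem_Ioo ⟨by nlinarith [pi_pos], by nlinarith [pi_pos]⟩
  have r1 := Real.Gamma_mul_Gamma_one_sub (μ / 2)
  rw [show π * (μ / 2) = π * μ / 2 by ring] at r1
  have r2 := Real.Gamma_mul_Gamma_one_sub μ
  rw [show π * μ = 2 * (π * μ / 2) by ring, Real.sin_two_mul] at r2
  have hval : (Real.Gamma (1 - μ))⁻¹ * ∫ s in Set.Ioi (0:ℝ), s ^ (-μ) * (s / (s ^ 2 + c ^ 2))
      = Real.Gamma μ * Real.cos (π * μ / 2) * c ^ (-μ) := by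
    have h1 : ∫ s in Set.Ioi (0:ℝ), s ^ (-μ) * (s / (s ^ 2 + c ^ 2))
        = ∫ s in Set.Ioi (0:ℝ), s ^ (1 - μ) / (s ^ 2 + c ^ 2) := by
      refine MeasureTheory.setIntegral_congr_fun measurableSet_Ioi fun s hs => ?_
      rw [Set.mem_Ioi] at hs
      rw [show (1:ℝ) - μ = 1 + -μ by ring, Real.rpow_add hs, Real.rpow_one]
      ring
    rw [h1, MC.main_value hμ0 hμ1 hc, inv_mul_eq_iff_eq_mul₀ hG.ne']
    have key : Real.Gamma (1 - μ) * (Real.Gamma μ * Real.cos (π * μ / 2))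
        = 1 / 2 * Real.Gamma (1 - μ / 2) * Real.Gamma (μ / 2) := by
      have e1 : Real.Gamma (1 - μ / 2) * Real.Gamma (μ / 2)
          = π / Real.sin (π * μ / 2) := by rw [mul_comm]; exact r1
      have e2 : Real.Gamma (1 - μ) * Real.Gamma μ
          = π / (2 * Real.sin (π * μ / 2) * Real.cos (π * μ / 2)) := by
        rw [mul_comm]; exact r2
      rw [mul_comm (Real.Gamma (1 - μ/2))] at e1
      rw [show Real.Gamma (1 - μ) * (Real.Gamma μ * Real.cos (π * μ / 2))
          = (Real.Gamma (1 - μ) * Real.Gamma μ) * Real.cos (π * μ / 2) by ring, e2,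
        show 1 / 2 * Real.Gamma (1 - μ / 2) * Real.Gamma (μ / 2)
          = 1 / 2 * (Real.Gamma (μ / 2) * Real.Gamma (1 - μ / 2)) by ring, e1,
        div_mul_eq_mul_div, mul_div_mul_right _ _ hc1.ne']
      ring
    linear_combination (-(c ^ (-μ))) * key
  rw [← hval]
  apply Tendsto.congr' ?_ ((MC.tends hμ0 hμ1 hc).const_mul (Real.Gamma (1 - μ))⁻¹)
  filter_upwards [Ici_mem_atTop (0:ℝ)] with R hR
  exact (MC.IR_eq hμ0 hμ1 hc hR).symm
end

section
/- For every real μ with 0 < μ < 1 and every real z₀ > 0, the complex-valued expression (e^{iπμ/2}/(2Γ(μ)))·[(1 − e^{iπ(μ−1)})·∫₀^R ξ^{μ−1} cos(z₀ξ) dξ + i·(1 + e^{iπ(μ−1)})·∫₀^R ξ^{μ−1} sin(z₀ξ) dξ] converges, as R→∞, to e^{iπμ}·z₀^{−μ}. (This is the statement that f(z) = z satisfies the generalised root identity at z₀ for μ ∈ (0,1): the μ-th fractional derivative side equals the root side e^{iπμ}/z₀^μ.) -/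
open Real Filter intervalIntegral Complex MeasureTheory Set Topology

private lemma integrable_rpow_exp {s : ℝ} (hs : -1 < s) {b : ℝ} (hb : 0 < b) :
    IntegrableOn (fun t : ℝ => t ^ s * Real.exp (-b * t)) (Ioi 0) := by
  have := integrableOn_rpow_mul_exp_neg_mul_rpow hs zero_lt_one hb
  simpa [Real.rpow_one] using this

private lemma contOn_rpow {s : ℝ} : ContinuousOn (fun t : ℝ => t ^ s) (Ioi 0) := fun t ht =>
  (Real.continuousAt_rpow_const t s (Or.inl (ne_of_gt ht))).continuousWithinAt

private lemma integrableOn_cpow_exp {s : ℝ} (hs : -1 < s) {c : ℂ} (hc : 0 < c.re) :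
    IntegrableOn (fun t : ℝ => ((t ^ s : ℝ) : ℂ) * Complex.exp (-(c * t))) (Ioi 0) := by
  apply Integrable.mono' (integrable_rpow_exp hs hc)
  · exact ((Complex.continuous_ofReal.comp_continuousOn contOn_rpow).mul
      (Complex.continuous_exp.comp ((continuous_const.mul Complex.continuous_ofReal).neg)).continuousOn).aestronglyMeasurable
      measurableSet_Ioi
  · filter_upwards [ae_restrict_mem measurableSet_Ioi] with t ht
    rw [norm_mul, Complex.norm_exp, Complex.norm_real, Real.norm_eq_abs,
      _root_.abs_of_nonneg (Real.rpow_nonneg (le_of_lt ht) s)]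
    have : (-(c * (t:ℂ))).re = -c.re * t := by simp [mul_comm]
    rw [this]

/-- derivative of `t ↦ ↑(t^p) * exp (-(z*t))` for `t > 0`. -/
private lemma hasDerivAt_aux (p : ℝ) (z : ℂ) {t : ℝ} (ht : 0 < t) :
    HasDerivAt (fun t : ℝ => ((t ^ p : ℝ) : ℂ) * Complex.exp (-(z * t)))
      (((p * t ^ (p-1) : ℝ) : ℂ) * Complex.exp (-(z * t))
        + ((t ^ p : ℝ) : ℂ) * (Complex.exp (-(z * t)) * (-z))) t := by
  have h1 : HasDerivAt (fun t : ℝ => ((t ^ p : ℝ) : ℂ)) ((p * t ^ (p-1) : ℝ) : ℂ) t :=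
    (Real.hasDerivAt_rpow_const (Or.inl (ne_of_gt ht))).ofReal_comp
  have h2 : HasDerivAt (fun t : ℝ => Complex.exp (-(z * t))) (Complex.exp (-(z * t)) * (-z)) t := by
    have : HasDerivAt (fun t : ℝ => -(z * (t:ℂ))) (-z) t := by
      simpa [Pi.neg_def] using ((Complex.ofRealCLM.hasDerivAt (x := t)).const_mul z).neg
    simpa using this.cexp
  exact h1.mul h2

/-- integration by parts identity. -/
private lemma parts_aux {μ : ℝ} (hμ0 : 0 < μ) {z : ℂ} (hz : 0 < z.re) :
    ∫ t in Ioi (0:ℝ), ((t ^ μ : ℝ) : ℂ) * Complex.exp (-(z * t)) =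
      ((μ:ℂ)/z) * ∫ t in Ioi (0:ℝ), ((t ^ (μ-1) : ℝ) : ℂ) * Complex.exp (-(z * t)) := by
  have hμ1 : (-1:ℝ) < μ - 1 := by linarith
  have hμ2 : (-1:ℝ) < μ := by linarith
  set g : ℝ → ℂ := fun t => ((t ^ μ : ℝ) : ℂ) * Complex.exp (-(z * t)) with hg
  set g' : ℝ → ℂ := fun t => ((μ * t ^ (μ-1) : ℝ) : ℂ) * Complex.exp (-(z * t))
      + ((t ^ μ : ℝ) : ℂ) * (Complex.exp (-(z * t)) * (-z)) with hg'
  have hgcont : ContinuousWithinAt g (Ici 0) 0 := by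
    apply ContinuousAt.continuousWithinAt
    exact ((Complex.continuous_ofReal.continuousAt).comp
      (Real.continuousAt_rpow_const 0 μ (Or.inr hμ0.le))).mul
      (Complex.continuous_exp.comp ((continuous_const.mul Complex.continuous_ofReal).neg)).continuousAt
  have hgderiv : ∀ t ∈ Ioi (0:ℝ), HasDerivAt g (g' t) t := fun t ht => hasDerivAt_aux μ z ht
  have h1 : IntegrableOn (fun t : ℝ => ((t ^ (μ-1) : ℝ) : ℂ) * Complex.exp (-(z * t))) (Ioi 0) :=
    integrableOn_cpow_exp hμ1 hz
  have h2 : IntegrableOn (fun t : ℝ => ((t ^ μ : ℝ) : ℂ) * Complex.exp (-(z * t))) (Ioi 0) :=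
    integrableOn_cpow_exp hμ2 hz
  have hg'int : IntegrableOn g' (Ioi 0) := by
    apply Integrable.congr ((h1.const_mul (μ:ℂ)).add (h2.const_mul (-z)))
    filter_upwards with t
    simp only [Pi.add_apply, hg']
    push_cast
    ring
  have hglim : Tendsto g atTop (𝓝 0) := by
    rw [tendsto_zero_iff_norm_tendsto_zero]
    apply Tendsto.congr' (f₁ := fun t : ℝ => t ^ μ * Real.exp (-z.re * t))
    · filter_upwards [eventually_gt_atTop (0:ℝ)] with t ht
      rw [hg, norm_mul, Complex.norm_exp,
        Complex.norm_real, Real.norm_eq_abs, _root_.abs_of_nonneg (Real.rpow_nonneg ht.le μ)]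
      congr 1
      simp [mul_comm]
    · exact tendsto_rpow_mul_exp_neg_mul_atTop_nhds_zero μ z.re hz
  have key := integral_Ioi_of_hasDerivAt_of_tendsto hgcont hgderiv hg'int hglim
  have hg0 : g 0 = 0 := by simp [hg, Real.zero_rpow (ne_of_gt hμ0)]
  rw [hg0, sub_zero] at key
  have expand : ∫ t in Ioi (0:ℝ), g' t =
      (μ:ℂ) * (∫ t in Ioi (0:ℝ), ((t ^ (μ-1) : ℝ) : ℂ) * Complex.exp (-(z * t)))
      + (-z) * (∫ t in Ioi (0:ℝ), ((t ^ μ : ℝ) : ℂ) * Complex.exp (-(z * t))) := by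
    rw [← MeasureTheory.integral_const_mul, ← MeasureTheory.integral_const_mul, ← MeasureTheory.integral_add (h1.const_mul _) (h2.const_mul _)]
    apply setIntegral_congr_fun measurableSet_Ioi
    intro t ht
    push_cast [hg']
    ring
  rw [expand] at key
  have hzne : z ≠ 0 := fun h => by simp [h] at hz
  field_simp
  linear_combination (-1 : ℂ) * key

private lemma cpow_gamma_integral {μ : ℝ} (hμ0 : 0 < μ) {c : ℂ} (hc : 0 < c.re) :
    ∫ t in Ioi (0:ℝ), ((t ^ (μ-1) : ℝ) : ℂ) * Complex.exp (-(c * t)) =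
      c ^ (-μ : ℂ) * (Real.Gamma μ : ℂ) := by
  have hμ1 : (-1:ℝ) < μ - 1 := by linarith
  set U : Set ℂ := {z : ℂ | 0 < z.re} with hU
  have hUopen : IsOpen U := isOpen_lt continuous_const Complex.continuous_re
  set Φ : ℂ → ℂ := fun z => ∫ t in Ioi (0:ℝ), ((t ^ (μ-1) : ℝ) : ℂ) * Complex.exp (-(z * t)) with hΦdef
  set K : ℂ → ℂ := fun z => z ^ (μ:ℂ) * Φ z with hKdef
  -- derivative of Φ
  have hΦderiv : ∀ z ∈ U, HasDerivAt Φ (-((μ:ℂ)/z) * Φ z) z := by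
    intro z hz
    have hzre : 0 < z.re := hz
    have hε : 0 < z.re / 2 := by linarith
    have main := _root_.hasDerivAt_integral_of_dominated_loc_of_deriv_le (μ := volume.restrict (Ioi 0))
      (F := fun (x : ℂ) (t : ℝ) => ((t ^ (μ-1) : ℝ) : ℂ) * Complex.exp (-(x * t)))
      (F' := fun (x : ℂ) (t : ℝ) => ((t ^ (μ-1) : ℝ) : ℂ) * (Complex.exp (-(x * t)) * (-(t:ℂ))))
      (x₀ := z) (s := Metric.ball z (z.re / 2))
      (bound := fun t : ℝ => t ^ μ * Real.exp (-(z.re/2) * t)) (Metric.ball_mem_nhds z hε) ?_ ?_ ?_ ?_ ?_ ?_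
    · obtain ⟨-, hd⟩ := main
      have : (∫ t in Ioi (0:ℝ), ((t ^ (μ-1) : ℝ) : ℂ) * (Complex.exp (-(z * t)) * (-(t:ℂ))))
          = -((μ:ℂ)/z) * Φ z := by
        have : (∫ t in Ioi (0:ℝ), ((t ^ (μ-1) : ℝ) : ℂ) * (Complex.exp (-(z * t)) * (-(t:ℂ))))
            = ∫ t in Ioi (0:ℝ), -(((t ^ μ : ℝ) : ℂ) * Complex.exp (-(z * t))) := by
          apply setIntegral_congr_fun measurableSet_Ioi
          intro t ht
          have : (t:ℝ) ^ (μ - 1) * t = t ^ μ := by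
            rw [← Real.rpow_add_one (ne_of_gt (show (0:ℝ) < t from ht))]
            norm_num
          push_cast [← this]
          ring
        rw [this, MeasureTheory.integral_neg, parts_aux hμ0 hzre]
        rw [hΦdef]
        ring
      rwa [this] at hd
    · filter_upwards with x
      exact ((Complex.continuous_ofReal.comp_continuousOn contOn_rpow).mul
        (Complex.continuous_exp.comp ((continuous_const.mul Complex.continuous_ofReal).neg)).continuousOn).aestronglyMeasurable
        measurableSet_Ioi
    · exact integrableOn_cpow_exp hμ1 hzre
    · apply ContinuousOn.aestronglyMeasurable _ measurableSet_Ioi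
      exact (Complex.continuous_ofReal.comp_continuousOn contOn_rpow).mul
        (((Complex.continuous_exp.comp ((continuous_const.mul Complex.continuous_ofReal).neg)).mul
          (Complex.continuous_ofReal.neg)).continuousOn)
    · filter_upwards [ae_restrict_mem measurableSet_Ioi] with t ht x hx
      have htpos : (0:ℝ) < t := ht
      have hxre : z.re / 2 < x.re := by
        have := Complex.abs_re_le_norm (x - z)
        rw [Complex.sub_re] at this
        have hb : ‖x - z‖ < z.re / 2 := by
          simpa [Complex.dist_eq] using Metric.mem_ball.mp hx
        have := abs_lt.mp (lt_of_le_of_lt this hb)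
        linarith [this.1]
      have hre : (-(x * (t:ℂ))).re = -x.re * t := by simp [mul_comm]
      rw [norm_mul, norm_mul, norm_neg, Complex.norm_exp, Complex.norm_real, Complex.norm_real,
        Real.norm_eq_abs, Real.norm_eq_abs,
        _root_.abs_of_nonneg (Real.rpow_nonneg htpos.le _),
        _root_.abs_of_nonneg htpos.le, hre]
      have h1 : t ^ (μ-1) * (Real.exp (-x.re * t) * t) = t ^ μ * Real.exp (-x.re * t) := by
        rw [show t ^ μ = t ^ (μ-1) * t by rw [← Real.rpow_add_one (ne_of_gt htpos)]; norm_num]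
        ring
      rw [h1]
      apply mul_le_mul_of_nonneg_left _ (Real.rpow_nonneg htpos.le μ)
      apply Real.exp_le_exp.mpr
      nlinarith
    · exact integrable_rpow_exp (by linarith : (-1:ℝ) < μ) hε
    · filter_upwards [ae_restrict_mem measurableSet_Ioi] with t ht x hx
      have : HasDerivAt (fun x : ℂ => -(x * (t:ℂ))) (-(t:ℂ)) x := by
        simpa [Pi.neg_def] using (hasDerivAt_mul_const (c := (t:ℂ))).neg
      simpa [mul_comm] using this.cexp.const_mul ((t ^ (μ-1) : ℝ) : ℂ)
  -- derivative of K is zero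
  have hKderiv : ∀ z ∈ U, HasDerivAt K 0 z := by
    intro z hz
    have hzre : 0 < z.re := hz
    have hzne : z ≠ 0 := fun h => by simp [h] at hzre
    have h1 : HasDerivAt (fun z : ℂ => z ^ (μ:ℂ)) ((μ:ℂ) * z ^ ((μ:ℂ) - 1)) z :=
      (Complex.hasStrictDerivAt_cpow_const (Or.inl hzre)).hasDerivAt
    have := h1.mul (hΦderiv z hz)
    have hsub : z ^ ((μ:ℂ) - 1) = z ^ (μ:ℂ) / z := by
      rw [Complex.cpow_sub _ _ hzne, Complex.cpow_one]
    rw [hKdef]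
    refine this.congr_deriv ?_
    rw [hsub]
    field_simp
    ring
  -- K is constant on U
  have hKconst : K c = K 1 := by
    apply (convex_halfSpace_re_gt (0:ℝ)).is_const_of_fderivWithin_eq_zero
      (f := K) (fun z hz => (hKderiv z hz).differentiableAt.differentiableWithinAt) _ hc
      (by simp : (0:ℝ) < (1:ℂ).re)
    intro z hz
    rw [fderivWithin_of_isOpen hUopen hz, (hKderiv z hz).hasFDerivAt.fderiv]
    ext v
    simp
  -- K 1 = Γ μ
  have hK1 : K 1 = (Real.Gamma μ : ℂ) := by
    rw [hKdef]
    simp only [Complex.one_cpow, one_mul, hΦdef]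
    rw [Real.Gamma_eq_integral hμ0]
    rw [show ((∫ x in Ioi (0:ℝ), Real.exp (-x) * x ^ (μ-1) : ℝ) : ℂ)
        = ∫ x in Ioi (0:ℝ), ((Real.exp (-x) * x ^ (μ-1) : ℝ) : ℂ) from (_root_.integral_ofReal).symm]
    apply setIntegral_congr_fun measurableSet_Ioi
    intro t ht
    simp only [← Complex.ofReal_neg, ← Complex.ofReal_exp, ← Complex.ofReal_mul]
    rw [mul_comm]
  -- conclude
  have hcne : c ≠ 0 := fun h => by simp [h] at hc
  have hKc : c ^ (μ:ℂ) * Φ c = (Real.Gamma μ : ℂ) := hKconst.trans hK1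
  calc Φ c = (c ^ (-μ:ℂ) * c ^ (μ:ℂ)) * Φ c := by
        rw [← Complex.cpow_add _ _ hcne]; norm_num
    _ = c ^ (-μ : ℂ) * (Real.Gamma μ : ℂ) := by rw [mul_assoc, hKc]

private lemma hasDerivAt_aux2 (p : ℝ) (c : ℂ) {t : ℝ} (ht : 0 < t) :
    HasDerivAt (fun t : ℝ => ((t ^ p : ℝ) : ℂ) * Complex.exp (c * t))
      (((p * t ^ (p-1) : ℝ) : ℂ) * Complex.exp (c * t)
        + ((t ^ p : ℝ) : ℂ) * (Complex.exp (c * t) * c)) t := by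
  have h1 : HasDerivAt (fun t : ℝ => ((t ^ p : ℝ) : ℂ)) ((p * t ^ (p-1) : ℝ) : ℂ) t :=
    (Real.hasDerivAt_rpow_const (Or.inl (ne_of_gt ht))).ofReal_comp
  have h2 : HasDerivAt (fun t : ℝ => Complex.exp (c * t)) (Complex.exp (c * t) * c) t := by
    have : HasDerivAt (fun t : ℝ => c * (t:ℂ)) c t := by
      simpa using (Complex.ofRealCLM.hasDerivAt (x := t)).const_mul c
    simpa using this.cexp
  exact h1.mul h2

/-- derivative of the antiderivative used in integration by parts on tails. -/
private lemma hasDerivAt_h {μ : ℝ} {c : ℂ} (hc : c ≠ 0) {t : ℝ} (ht : 0 < t) :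
    HasDerivAt (fun t : ℝ => ((t ^ (μ-1) : ℝ) : ℂ) * Complex.exp (c * t) / c)
      (((t ^ (μ-1) : ℝ) : ℂ) * Complex.exp (c * t)
        + ((μ:ℂ)-1)/c * (((t ^ (μ-2) : ℝ) : ℂ) * Complex.exp (c * t))) t := by
  have := (hasDerivAt_aux2 (μ-1) c ht).div_const c
  refine this.congr_deriv ?_
  rw [show μ - 1 - 1 = μ - 2 by ring]
  push_cast
  field_simp
  ring

private lemma contOn_mul_exp {s : ℝ} (c : ℂ) :
    ContinuousOn (fun t : ℝ => ((t ^ s : ℝ) : ℂ) * Complex.exp (c * t)) (Ioi 0) :=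
  (Complex.continuous_ofReal.comp_continuousOn contOn_rpow).mul
    (Complex.continuous_exp.comp (continuous_const.mul Complex.continuous_ofReal)).continuousOn

/-- tail integrability, decaying or oscillatory exponential. -/
private lemma intTail {s : ℝ} (hs : s < -1) {c : ℂ} (hc : c.re ≤ 0) :
    IntegrableOn (fun t : ℝ => ((t ^ s : ℝ) : ℂ) * Complex.exp (c * t)) (Ioi 1) := by
  apply Integrable.mono' (integrableOn_Ioi_rpow_of_lt hs one_pos)
  · exact ((contOn_mul_exp c).mono (Ioi_subset_Ioi zero_le_one)).aestronglyMeasurable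
      measurableSet_Ioi
  · filter_upwards [ae_restrict_mem measurableSet_Ioi] with t ht
    have ht0 : (0:ℝ) < t := lt_trans one_pos ht
    rw [norm_mul, Complex.norm_exp, Complex.norm_real, Real.norm_eq_abs,
      _root_.abs_of_nonneg (Real.rpow_nonneg ht0.le s)]
    have : (c * (t:ℂ)).re = c.re * t := by simp
    rw [this]
    apply mul_le_of_le_one_right (Real.rpow_nonneg ht0.le s)
    exact Real.exp_le_one_iff.mpr (mul_nonpos_of_nonpos_of_nonneg hc ht0.le)

private lemma integrableOn_cpow_exp' {s : ℝ} (hs : -1 < s) {c : ℂ} (hc : c.re < 0) :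
    IntegrableOn (fun t : ℝ => ((t ^ s : ℝ) : ℂ) * Complex.exp (c * t)) (Ioi 0) := by
  have h := integrableOn_cpow_exp hs (c := -c) (by simpa using hc)
  simpa [neg_mul, neg_neg] using h

private lemma intervalIntegrable_cpow_exp {s : ℝ} (hs : -1 < s) (c : ℂ) (a b : ℝ) :
    IntervalIntegrable (fun t : ℝ => ((t ^ s : ℝ) : ℂ) * Complex.exp (c * t)) volume a b := by
  have h1 : IntervalIntegrable (fun t : ℝ => ((t ^ s : ℝ) : ℂ)) volume a b := by
    rw [intervalIntegrable_iff]
    exact (intervalIntegrable_iff.mp (intervalIntegrable_rpow' hs (a := a) (b := b))).ofReal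
  exact h1.mul_continuousOn
    (Complex.continuous_exp.comp (continuous_const.mul Complex.continuous_ofReal)).continuousOn

/-- Integration by parts on `[1, R]`. -/
private lemma interval_parts {μ : ℝ} {c : ℂ} (hc : c ≠ 0) {R : ℝ} (hR : 1 ≤ R) :
    ∫ t in (1:ℝ)..R, ((t ^ (μ-1) : ℝ) : ℂ) * Complex.exp (c * t)
      = (((R ^ (μ-1) : ℝ) : ℂ) * Complex.exp (c * R) / c - Complex.exp c / c)
        - ((μ:ℂ)-1)/c * ∫ t in (1:ℝ)..R, ((t ^ (μ-2) : ℝ) : ℂ) * Complex.exp (c * t) := by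
  have hsub : Set.uIcc (1:ℝ) R ⊆ Ioi 0 := by
    rw [Set.uIcc_of_le hR]
    exact fun x hx => lt_of_lt_of_le one_pos hx.1
  have hint1 : IntervalIntegrable (fun t : ℝ => ((t ^ (μ-1) : ℝ) : ℂ) * Complex.exp (c * t))
      volume 1 R := ((contOn_mul_exp c).mono hsub).intervalIntegrable
  have hint2 : IntervalIntegrable (fun t : ℝ => ((t ^ (μ-2) : ℝ) : ℂ) * Complex.exp (c * t))
      volume 1 R := ((contOn_mul_exp c).mono hsub).intervalIntegrable
  have key := intervalIntegral.integral_eq_sub_of_hasDerivAt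
    (f := fun t : ℝ => ((t ^ (μ-1) : ℝ) : ℂ) * Complex.exp (c * t) / c)
    (f' := fun t : ℝ => ((t ^ (μ-1) : ℝ) : ℂ) * Complex.exp (c * t)
      + ((μ:ℂ)-1)/c * (((t ^ (μ-2) : ℝ) : ℂ) * Complex.exp (c * t)))
    (fun t htm => hasDerivAt_h hc (hsub htm)) (hint1.add (hint2.const_mul _))
  rw [intervalIntegral.integral_add hint1 (hint2.const_mul _),
    intervalIntegral.integral_const_mul] at key
  simp only [Real.one_rpow, Complex.ofReal_one, one_mul, mul_one] at key
  linear_combination key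

/-- Integration by parts on `(1, ∞)` for a decaying exponential. -/
private lemma Ioi_parts {μ : ℝ} (hμ0 : 0 < μ) (hμ1 : μ < 1) {c : ℂ} (hc : c.re < 0) :
    ∫ t in Ioi (1:ℝ), ((t ^ (μ-1) : ℝ) : ℂ) * Complex.exp (c * t)
      = -(Complex.exp c / c) - ((μ:ℂ)-1)/c * ∫ t in Ioi (1:ℝ), ((t ^ (μ-2) : ℝ) : ℂ) * Complex.exp (c * t) := by
  have hcne : c ≠ 0 := fun h => by simp [h] at hc
  set f : ℝ → ℂ := fun t => ((t ^ (μ-1) : ℝ) : ℂ) * Complex.exp (c * t) / c with hf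
  have hcont : ContinuousWithinAt f (Ici 1) 1 :=
    (((contOn_mul_exp (s := μ-1) c).div_const c).mono (Ici_subset_Ioi.mpr one_pos)).continuousWithinAt
      (by exact self_mem_Ici)
  have hderiv : ∀ t ∈ Ioi (1:ℝ), HasDerivAt f
      (((t ^ (μ-1) : ℝ) : ℂ) * Complex.exp (c * t)
        + ((μ:ℂ)-1)/c * (((t ^ (μ-2) : ℝ) : ℂ) * Complex.exp (c * t))) t :=
    fun t ht => hasDerivAt_h hcne (lt_trans one_pos ht)
  have hint1 : IntegrableOn (fun t : ℝ => ((t ^ (μ-1) : ℝ) : ℂ) * Complex.exp (c * t)) (Ioi 1) :=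
    (integrableOn_cpow_exp' (by linarith) hc).mono_set (Ioi_subset_Ioi zero_le_one)
  have hint2 : IntegrableOn (fun t : ℝ => ((t ^ (μ-2) : ℝ) : ℂ) * Complex.exp (c * t)) (Ioi 1) :=
    intTail (by linarith) hc.le
  have hlim : Tendsto f atTop (𝓝 0) := by
    rw [tendsto_zero_iff_norm_tendsto_zero]
    apply Tendsto.congr' (f₁ := fun t : ℝ => t ^ (μ-1) * Real.exp (c.re * t) / ‖c‖)
    · filter_upwards [eventually_gt_atTop (0:ℝ)] with t ht
      rw [hf, norm_div, norm_mul, Complex.norm_exp,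
        Complex.norm_real, Real.norm_eq_abs, _root_.abs_of_nonneg (Real.rpow_nonneg ht.le _)]
      congr 2
      simp
    · have : Tendsto (fun t : ℝ => t ^ (μ-1) * Real.exp (c.re * t)) atTop (𝓝 0) := by
        have := tendsto_rpow_mul_exp_neg_mul_atTop_nhds_zero (μ-1) (-c.re) (by linarith)
        simpa using this
      simpa using this.div_const ‖c‖
  have key := integral_Ioi_of_hasDerivAt_of_tendsto hcont hderiv
    (hint1.add (hint2.const_mul _)) hlim
  rw [MeasureTheory.integral_add hint1 (hint2.const_mul _), MeasureTheory.integral_const_mul] at key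
  have hf1 : f 1 = Complex.exp c / c := by simp [hf]
  rw [hf1] at key
  linear_combination key

/-- The regularised identity for `ε > 0`. -/
private lemma eps_identity {μ z₀ : ℝ} (hμ0 : 0 < μ) (hμ1 : μ < 1) (hz₀ : 0 < z₀)
    {ε : ℝ} (hε : 0 < ε) :
    (((ε:ℂ) - Complex.I * z₀) ^ (-μ:ℂ)) * (Real.Gamma μ : ℂ)
      = (∫ t in Ioc (0:ℝ) 1, ((t ^ (μ-1):ℝ):ℂ) * Complex.exp ((Complex.I * z₀ - ε) * t))
        - Complex.exp (Complex.I * z₀ - ε) / (Complex.I * z₀ - ε)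
        - ((μ:ℂ)-1)/(Complex.I * z₀ - ε)
            * ∫ t in Ioi (1:ℝ), ((t ^ (μ-2):ℝ):ℂ) * Complex.exp ((Complex.I * z₀ - ε) * t) := by
  set c : ℂ := Complex.I * z₀ - ε with hcdef
  have hcre : c.re = -ε := by simp [hcdef]
  have hcre' : c.re < 0 := by rw [hcre]; linarith
  have key := cpow_gamma_integral hμ0 (c := (ε:ℂ) - Complex.I * z₀) (by simp [hε])
  have hrw : ∀ t : ℝ, -((((ε:ℂ) - Complex.I * z₀)) * t) = c * t := fun t => by rw [hcdef]; ring
  simp only [hrw] at key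
  have hint : IntegrableOn (fun t : ℝ => ((t ^ (μ-1):ℝ):ℂ) * Complex.exp (c * t)) (Ioi 0) :=
    integrableOn_cpow_exp' (by linarith) hcre'
  have hsplit : ∫ t in Ioi (0:ℝ), ((t ^ (μ-1):ℝ):ℂ) * Complex.exp (c * t)
      = (∫ t in Ioc (0:ℝ) 1, ((t ^ (μ-1):ℝ):ℂ) * Complex.exp (c * t))
        + ∫ t in Ioi (1:ℝ), ((t ^ (μ-1):ℝ):ℂ) * Complex.exp (c * t) := by
    rw [← Ioc_union_Ioi_eq_Ioi (zero_le_one)]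
    exact setIntegral_union (Ioc_disjoint_Ioi le_rfl) measurableSet_Ioi
      (hint.mono_set Ioc_subset_Ioi_self) (hint.mono_set (Ioi_subset_Ioi zero_le_one))
  rw [hsplit, Ioi_parts hμ0 hμ1 hcre'] at key
  rw [← key]
  ring

private lemma tendsto_T_L0 {μ z₀ : ℝ} (hμ0 : 0 < μ) (hμ1 : μ < 1) (hz₀ : 0 < z₀) :
    Tendsto (fun R : ℝ => ∫ t in (0:ℝ)..R,
        ((t ^ (μ-1):ℝ):ℂ) * Complex.exp ((Complex.I * z₀) * t)) atTop
      (𝓝 ((∫ t in Ioc (0:ℝ) 1, ((t ^ (μ-1):ℝ):ℂ) * Complex.exp ((Complex.I * z₀) * t))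
          - Complex.exp (Complex.I * z₀) / (Complex.I * z₀)
          - ((μ:ℂ)-1)/(Complex.I * z₀)
              * ∫ t in Ioi (1:ℝ), ((t ^ (μ-2):ℝ):ℂ) * Complex.exp ((Complex.I * z₀) * t))) := by
  set c : ℂ := Complex.I * (z₀:ℂ) with hc
  have hcne : c ≠ 0 := by
    rw [hc]
    exact mul_ne_zero Complex.I_ne_zero (by exact_mod_cast ne_of_gt hz₀)
  have hcre : c.re = 0 := by simp [hc]
  have heq : ∀ᶠ R in atTop, (∫ t in Ioc (0:ℝ) 1, ((t ^ (μ-1):ℝ):ℂ) * Complex.exp (c * t))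
      + ((((R ^ (μ-1) : ℝ):ℂ) * Complex.exp (c * R) / c - Complex.exp c / c)
        - ((μ:ℂ)-1)/c * ∫ t in (1:ℝ)..R, ((t ^ (μ-2):ℝ):ℂ) * Complex.exp (c * t))
      = ∫ t in (0:ℝ)..R, ((t ^ (μ-1):ℝ):ℂ) * Complex.exp (c * t) := by
    filter_upwards [eventually_ge_atTop (1:ℝ)] with R hR
    rw [← intervalIntegral.integral_add_adjacent_intervals
      (intervalIntegrable_cpow_exp (by linarith : (-1:ℝ) < μ-1) c 0 1)
      (intervalIntegrable_cpow_exp (by linarith : (-1:ℝ) < μ-1) c 1 R),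
      intervalIntegral.integral_of_le zero_le_one, interval_parts hcne hR]
  have t1 : Tendsto (fun R : ℝ => ((R ^ (μ-1):ℝ):ℂ) * Complex.exp (c * R) / c) atTop (𝓝 0) := by
    have base : Tendsto (fun R : ℝ => R ^ (μ-1) / ‖c‖) atTop (𝓝 0) := by
      have h := (tendsto_rpow_neg_atTop (by linarith : (0:ℝ) < 1-μ)).div_const ‖c‖
      rw [zero_div] at h
      simpa only [show μ-1 = -(1-μ) by ring] using h
    apply squeeze_zero_norm' ?_ base
    filter_upwards [eventually_gt_atTop (0:ℝ)] with R hR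
    rw [norm_div, norm_mul, Complex.norm_real, Real.norm_eq_abs,
      _root_.abs_of_nonneg (Real.rpow_nonneg hR.le _),
      Complex.norm_exp]
    have h0 : (c * (R:ℂ)).re = 0 := by simp [hcre]
    rw [h0, Real.exp_zero, mul_one]
  have t2 : Tendsto (fun R : ℝ => ∫ t in (1:ℝ)..R, ((t ^ (μ-2):ℝ):ℂ) * Complex.exp (c * t))
      atTop (𝓝 (∫ t in Ioi (1:ℝ), ((t ^ (μ-2):ℝ):ℂ) * Complex.exp (c * t))) :=
    intervalIntegral_tendsto_integral_Ioi 1 (intTail (by linarith) (le_of_eq hcre)) tendsto_id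
  have hconst : Tendsto (fun _ : ℝ =>
      (∫ t in Ioc (0:ℝ) 1, ((t ^ (μ-1):ℝ):ℂ) * Complex.exp (c * t))) atTop
      (𝓝 (∫ t in Ioc (0:ℝ) 1, ((t ^ (μ-1):ℝ):ℂ) * Complex.exp (c * t))) := tendsto_const_nhds
  have h2 := hconst.add ((t1.sub_const (Complex.exp c / c)).sub
    (t2.const_mul (((μ:ℂ)-1)/c)))
  have h3 := Tendsto.congr' heq h2
  convert h3 using 2
  ring

private lemma L0_eq {μ z₀ : ℝ} (hμ0 : 0 < μ) (hμ1 : μ < 1) (hz₀ : 0 < z₀) :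
    (∫ t in Ioc (0:ℝ) 1, ((t ^ (μ-1):ℝ):ℂ) * Complex.exp ((Complex.I * z₀) * t))
      - Complex.exp (Complex.I * z₀) / (Complex.I * z₀)
      - ((μ:ℂ)-1)/(Complex.I * z₀)
          * ∫ t in Ioi (1:ℝ), ((t ^ (μ-2):ℝ):ℂ) * Complex.exp ((Complex.I * z₀) * t)
    = ((-(Complex.I * z₀)) ^ (-μ:ℂ)) * (Real.Gamma μ : ℂ) := by
  set c : ℂ := Complex.I * (z₀:ℂ) with hc
  have hcne : c ≠ 0 := by
    rw [hc]
    exact mul_ne_zero Complex.I_ne_zero (by exact_mod_cast ne_of_gt hz₀)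
  have hcre : c.re = 0 := by simp [hc]
  set l : Filter ℝ := 𝓝[>] (0:ℝ) with hl
  set W : ℝ → ℂ := fun ε =>
    (∫ t in Ioc (0:ℝ) 1, ((t ^ (μ-1):ℝ):ℂ) * Complex.exp ((c - ε) * t))
      - Complex.exp (c - ε) / (c - ε)
      - ((μ:ℂ)-1)/(c - ε) * ∫ t in Ioi (1:ℝ), ((t ^ (μ-2):ℝ):ℂ) * Complex.exp ((c - ε) * t)
    with hW
  -- dominated convergence helper for the two integral pieces
  have hdom : ∀ (s : Set ℝ) (p : ℝ), MeasurableSet s → s ⊆ Ioi 0 →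
      IntegrableOn (fun t : ℝ => t ^ p) s volume →
      Tendsto (fun ε : ℝ => ∫ t in s, ((t ^ p : ℝ):ℂ) * Complex.exp ((c - ε) * t)) l
        (𝓝 (∫ t in s, ((t ^ p : ℝ):ℂ) * Complex.exp (c * t))) := by
    intro s p hms hsub hint
    apply MeasureTheory.tendsto_integral_filter_of_dominated_convergence (fun t : ℝ => t ^ p)
    · filter_upwards with ε
      exact ((contOn_mul_exp (c - ε)).mono hsub).aestronglyMeasurable hms
    · filter_upwards [self_mem_nhdsWithin] with ε hε
      filter_upwards [ae_restrict_mem hms] with t ht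
      have ht0 : (0:ℝ) < t := hsub ht
      rw [norm_mul, Complex.norm_real, Real.norm_eq_abs,
        _root_.abs_of_nonneg (Real.rpow_nonneg ht0.le _),
        Complex.norm_exp]
      have hre : ((c - ε) * (t:ℂ)).re = -ε * t := by simp [hcre]
      rw [hre]
      apply mul_le_of_le_one_right (Real.rpow_nonneg ht0.le _)
      apply Real.exp_le_one_iff.mpr
      have : (0:ℝ) < ε := hε
      nlinarith
    · exact hint
    · filter_upwards [ae_restrict_mem hms] with t ht
      have hcont : Continuous fun ε : ℝ =>
          ((t ^ p : ℝ):ℂ) * Complex.exp ((c - ε) * t) :=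
        continuous_const.mul (Complex.continuous_exp.comp
          ((continuous_const.sub Complex.continuous_ofReal).mul continuous_const))
      have := (hcont.tendsto 0).mono_left (nhdsWithin_le_nhds (s := Ioi (0:ℝ)))
      simpa using this
  have hA := hdom (Ioc 0 1) (μ-1) measurableSet_Ioc Ioc_subset_Ioi_self
    ((intervalIntegrable_iff_integrableOn_Ioc_of_le zero_le_one).mp
      (intervalIntegrable_rpow' (by linarith)))
  have hC := hdom (Ioi 1) (μ-2) measurableSet_Ioi (Ioi_subset_Ioi zero_le_one)
    (integrableOn_Ioi_rpow_of_lt (by linarith) one_pos)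
  have hB : Tendsto (fun ε : ℝ => Complex.exp (c - ε) / (c - ε)) l
      (𝓝 (Complex.exp c / c)) := by
    have hcont : ContinuousAt (fun ε : ℝ => Complex.exp (c - ε) / (c - ε)) 0 := by
      apply ContinuousAt.div
      · exact (Complex.continuous_exp.comp
          (continuous_const.sub Complex.continuous_ofReal)).continuousAt
      · exact (continuous_const.sub Complex.continuous_ofReal).continuousAt
      · simpa using hcne
    have := hcont.tendsto.mono_left (nhdsWithin_le_nhds (s := Ioi (0:ℝ)))
    simpa using this
  have hK : Tendsto (fun ε : ℝ => ((μ:ℂ)-1)/(c - ε)) l (𝓝 (((μ:ℂ)-1)/c)) := by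
    have hcont : ContinuousAt (fun ε : ℝ => ((μ:ℂ)-1)/(c - ε)) 0 := by
      apply ContinuousAt.div continuousAt_const
        (continuous_const.sub Complex.continuous_ofReal).continuousAt
      simpa [hc] using hcne
    have := hcont.tendsto.mono_left (nhdsWithin_le_nhds (s := Ioi (0:ℝ)))
    simpa using this
  have hW1 : Tendsto W l (𝓝
      ((∫ t in Ioc (0:ℝ) 1, ((t ^ (μ-1):ℝ):ℂ) * Complex.exp (c * t))
        - Complex.exp c / c
        - ((μ:ℂ)-1)/c * ∫ t in Ioi (1:ℝ), ((t ^ (μ-2):ℝ):ℂ) * Complex.exp (c * t))) :=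
    (hA.sub hB).sub (hK.mul hC)
  have hW2 : Tendsto W l (𝓝 (((-c) ^ (-μ:ℂ)) * (Real.Gamma μ : ℂ))) := by
    have heq : ∀ᶠ (ε : ℝ) in l, (((ε:ℂ) - c) ^ (-μ:ℂ)) * (Real.Gamma μ : ℂ) = W ε := by
      filter_upwards [self_mem_nhdsWithin] with ε hε
      exact eps_identity hμ0 hμ1 hz₀ hε
    apply Tendsto.congr' heq
    have cont1 : Tendsto (fun ε : ℝ => (ε:ℂ) - c) l (𝓝 (-c)) := by
      have h : Continuous (fun ε : ℝ => (ε:ℂ) - c) :=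
        Complex.continuous_ofReal.sub continuous_const
      have := (h.tendsto 0).mono_left (nhdsWithin_le_nhds (s := Ioi (0:ℝ)))
      simpa using this
    have cont2 : ContinuousAt (fun z : ℂ => z ^ (-μ:ℂ)) (-c) := by
      apply _root_.continuousAt_cpow_const
      exact Or.inr (by simpa [hc] using ne_of_gt hz₀)
    exact ((cont2.tendsto.comp cont1).mul_const _)
  exact tendsto_nhds_unique hW1 hW2

private lemma cpow_value {μ z₀ : ℝ} (hz₀ : 0 < z₀) :
    (-(Complex.I * z₀)) ^ (-μ:ℂ)
      = ((z₀ ^ (-μ) : ℝ) : ℂ) * Complex.exp (Complex.I * π * μ / 2) := by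
  have hne : -(Complex.I * (z₀:ℂ)) ≠ 0 := by
    simp only [neg_ne_zero]
    exact mul_ne_zero Complex.I_ne_zero (by exact_mod_cast ne_of_gt hz₀)
  rw [Complex.cpow_def_of_ne_zero hne]
  have hlog : Complex.log (-(Complex.I * z₀)) = (Real.log z₀ : ℂ) - (π/2) * Complex.I := by
    apply Complex.ext
    · rw [Complex.log_re]
      simp [map_neg_eq_map, Complex.norm_real, _root_.abs_of_pos hz₀]
    · rw [Complex.log_im]
      rw [show -(Complex.I * (z₀:ℂ)) = (z₀:ℂ) * (-Complex.I) by ring]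
      rw [Complex.arg_real_mul _ hz₀, Complex.arg_neg_I]
      simp
  rw [hlog, show ((Real.log z₀ : ℂ) - (π/2) * Complex.I) * (-μ:ℂ)
      = ((-μ * Real.log z₀ : ℝ):ℂ) + Complex.I * π * μ / 2 by push_cast; ring,
    Complex.exp_add, ← Complex.ofReal_exp]
  congr 2
  rw [Real.rpow_def_of_pos hz₀, mul_comm]

private lemma II_ofReal {f : ℝ → ℝ} {a b : ℝ} (h : IntervalIntegrable f volume a b) :
    IntervalIntegrable (fun t => ((f t : ℝ) : ℂ)) volume a b := by
  rw [intervalIntegrable_iff] at h ⊢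
  exact h.ofReal

/-- For `0 < μ < 1` and real `z₀ > 0`, the derivative side of the generalised root
identity for `f(z) = z` converges, as `R → ∞`, to the root side `e^(iπμ) z₀^(-μ)`. -/
theorem root_identity_id_fn (μ z₀ : ℝ) (hμ0 : 0 < μ) (hμ1 : μ < 1) (hz₀ : 0 < z₀) :
    Tendsto
      (fun R : ℝ =>
        (Complex.exp (Complex.I * π * μ / 2) / (2 * (Real.Gamma μ : ℂ))) *
          ((1 - Complex.exp (Complex.I * π * (μ - 1))) *
              ((∫ ξ in (0:ℝ)..R, ξ ^ (μ - 1) * Real.cos (z₀ * ξ)) : ℝ) +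
            Complex.I * (1 + Complex.exp (Complex.I * π * (μ - 1))) *
              ((∫ ξ in (0:ℝ)..R, ξ ^ (μ - 1) * Real.sin (z₀ * ξ)) : ℝ)))
      atTop (nhds (Complex.exp (Complex.I * π * μ) * ((z₀ ^ (-μ) : ℝ) : ℂ))) := by
  have hΓ : (Real.Gamma μ : ℂ) ≠ 0 := by
    exact_mod_cast ne_of_gt (Real.Gamma_pos_of_pos hμ0)
  set T : ℝ → ℂ := fun R => ∫ t in (0:ℝ)..R, ((t ^ (μ-1):ℝ):ℂ) * Complex.exp ((Complex.I * z₀) * t)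
    with hTdef
  set L : ℂ := (((z₀ ^ (-μ) : ℝ) : ℂ) * Complex.exp (Complex.I * π * μ / 2)) * (Real.Gamma μ : ℂ)
    with hLdef
  have hT : Tendsto T atTop (𝓝 L) := by
    have h := tendsto_T_L0 hμ0 hμ1 hz₀
    rw [L0_eq hμ0 hμ1 hz₀, cpow_value hz₀] at h
    exact h
  -- relate T to the real integrals
  have hTR : ∀ R : ℝ, T R
      = ((∫ ξ in (0:ℝ)..R, ξ ^ (μ - 1) * Real.cos (z₀ * ξ)) : ℝ)
        + Complex.I * ((∫ ξ in (0:ℝ)..R, ξ ^ (μ - 1) * Real.sin (z₀ * ξ)) : ℝ) := by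
    intro R
    have hcos : IntervalIntegrable (fun t : ℝ => t ^ (μ-1) * Real.cos (z₀ * t)) volume 0 R :=
      (intervalIntegrable_rpow' (by linarith)).mul_continuousOn
        (Real.continuous_cos.comp (continuous_const.mul continuous_id)).continuousOn
    have hsin : IntervalIntegrable (fun t : ℝ => t ^ (μ-1) * Real.sin (z₀ * t)) volume 0 R :=
      (intervalIntegrable_rpow' (by linarith)).mul_continuousOn
        (Real.continuous_sin.comp (continuous_const.mul continuous_id)).continuousOn
    have step1 : T R = ∫ t in (0:ℝ)..R,
        (((t ^ (μ-1) * Real.cos (z₀ * t) : ℝ) : ℂ)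
          + Complex.I * ((t ^ (μ-1) * Real.sin (z₀ * t) : ℝ) : ℂ)) := by
      apply intervalIntegral.integral_congr
      intro t _
      show ((t ^ (μ-1):ℝ):ℂ) * Complex.exp ((Complex.I * (z₀:ℂ)) * t)
        = ((t ^ (μ-1) * Real.cos (z₀ * t) : ℝ) : ℂ)
          + Complex.I * ((t ^ (μ-1) * Real.sin (z₀ * t) : ℝ) : ℂ)
      have hexp : Complex.exp ((Complex.I * z₀) * t)
          = Complex.cos ((z₀ * t : ℝ) : ℂ) + Complex.sin ((z₀ * t : ℝ) : ℂ) * Complex.I := by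
        rw [show (Complex.I * (z₀:ℂ)) * (t:ℂ) = ((z₀ * t : ℝ):ℂ) * Complex.I by push_cast; ring,
          Complex.exp_mul_I]
      rw [hexp, ← Complex.ofReal_cos, ← Complex.ofReal_sin]
      push_cast
      ring
    rw [step1, intervalIntegral.integral_add (II_ofReal hcos) ((II_ofReal hsin).const_mul _),
      intervalIntegral.integral_const_mul, intervalIntegral.integral_ofReal,
      intervalIntegral.integral_ofReal]
  set A : ℂ := Complex.exp (Complex.I * π * (μ - 1)) with hAdef
  set K : ℂ := Complex.exp (Complex.I * π * μ / 2) / (2 * (Real.Gamma μ : ℂ)) with hKdef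
  have hconjT : Tendsto (fun R => (starRingEnd ℂ) (T R)) atTop (𝓝 ((starRingEnd ℂ) L)) :=
    ((Complex.continuous_conj.tendsto L).comp hT)
  have final := ((hT.sub (hconjT.const_mul A)).const_mul K)
  -- the function in the theorem equals fun R => K * (T R - A * conj (T R))
  have hfun : ∀ R : ℝ,
      K * ((1 - A) * ((∫ ξ in (0:ℝ)..R, ξ ^ (μ - 1) * Real.cos (z₀ * ξ)) : ℝ)
        + Complex.I * (1 + A) * ((∫ ξ in (0:ℝ)..R, ξ ^ (μ - 1) * Real.sin (z₀ * ξ)) : ℝ))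
      = K * (T R - A * (starRingEnd ℂ) (T R)) := by
    intro R
    have h1 := hTR R
    have h2 : (starRingEnd ℂ) (T R)
        = ((∫ ξ in (0:ℝ)..R, ξ ^ (μ - 1) * Real.cos (z₀ * ξ)) : ℝ)
          - Complex.I * ((∫ ξ in (0:ℝ)..R, ξ ^ (μ - 1) * Real.sin (z₀ * ξ)) : ℝ) := by
      rw [h1]
      simp [Complex.conj_ofReal]
      ring
    rw [h2, h1]
    ring
  have final2 := (tendsto_congr hfun).mpr final
  have hw : (starRingEnd ℂ) (Complex.I * ↑π * ↑μ / 2) = -(Complex.I * ↑π * ↑μ / 2) := by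
    rw [show Complex.I * (π:ℂ) * (μ:ℂ) / 2 = ((π * μ / 2 : ℝ) : ℂ) * Complex.I by push_cast; ring,
      map_mul, Complex.conj_ofReal, Complex.conj_I]
    ring
  have hconjL : (starRingEnd ℂ) L
      = (((z₀ ^ (-μ):ℝ):ℂ) * Complex.exp (-(Complex.I * ↑π * ↑μ / 2))) * (Real.Gamma μ:ℂ) := by
    rw [hLdef, map_mul, map_mul, Complex.conj_ofReal, Complex.conj_ofReal, ← Complex.exp_conj, hw]
  have hA : A = -Complex.exp (Complex.I * ↑π * ↑μ) := by
    rw [hAdef, show Complex.I * ↑π * ((μ:ℂ) - 1) = Complex.I * ↑π * ↑μ - ↑π * Complex.I by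
      push_cast; ring, Complex.exp_sub, Complex.exp_pi_mul_I]
    ring
  have e1 : Complex.exp (Complex.I*↑π*↑μ/2) * Complex.exp (Complex.I*↑π*↑μ/2)
      = Complex.exp (Complex.I*↑π*↑μ) := by
    rw [← Complex.exp_add]
    congr 1
    ring
  have hval : K * (L - A * (starRingEnd ℂ) L)
      = Complex.exp (Complex.I * ↑π * ↑μ) * ((z₀ ^ (-μ) : ℝ) : ℂ) := by
    rw [hconjL, hA, hKdef, hLdef, Complex.exp_neg, ← e1]
    field_simp [hΓ, Complex.exp_ne_zero]
    ring
  rwa [hval] at final2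
end

section
/- For every real μ with −1 < μ < 0 and every real x > −1, the sequence k ↦ ∑_{j=1}^k (x+j)^{−μ} − (x+k)^{1−μ}/(1−μ) − (1/2)·(x+k)^{−μ} converges to a (finite real) limit as k → ∞. (This limit gives the Cesaro-regularised root side r_Γ(x,μ) = −e^{iπμ}·lim for the function Γ(z+1) in the range −1 < μ < 0.) -/
open Real Filter Finset

/-- Tangent line lies above a concave power function: for `0 < p ≤ 1` and `c > 0`,
`t ^ p` lies below the tangent line to `· ^ p` at `c`. -/
lemma tangent_above {p c t : ℝ} (hp0 : 0 < p) (hp1 : p ≤ 1) (hc : 0 < c) (ht : 0 ≤ t) :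
    t ^ p ≤ c ^ p + p * (c ^ p / c) * (t - c) := by
  have hs : -1 ≤ t / c - 1 := by
    have : 0 ≤ t / c := div_nonneg ht hc.le
    linarith
  have hB := rpow_one_add_le_one_add_mul_self hs hp0.le hp1
  have h1 : (1 + (t / c - 1)) = t / c := by ring
  rw [h1, Real.div_rpow ht hc.le] at hB
  have hcq : 0 < c ^ p := Real.rpow_pos_of_pos hc _
  rw [div_le_iff₀ hcq] at hB
  calc t ^ p ≤ (1 + p * (t / c - 1)) * c ^ p := hB
    _ = c ^ p + p * (c ^ p / c) * (t - c) := by field_simp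

/-- Two-sided trapezoid bounds for `∫_a^{a+1} t^p dt` when `0 < p < 1`. -/
lemma step_bounds {p a : ℝ} (hp0 : 0 < p) (hp1 : p < 1) (ha : 0 < a) :
    (a ^ p + (a + 1) ^ p) / 2 ≤ ((a + 1) ^ (p + 1) - a ^ (p + 1)) / (p + 1) ∧
      ((a + 1) ^ (p + 1) - a ^ (p + 1)) / (p + 1) ≤
        (a ^ p + (a + 1) ^ p) / 2 +
          (p * (a ^ p / a) - p * ((a + 1) ^ p / (a + 1))) / 4 := by
  have hb : (0 : ℝ) < a + 1 := by linarith
  have hab : a ≤ a + 1 := by linarith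
  have hI : (∫ t in a..(a + 1), t ^ p) = ((a + 1) ^ (p + 1) - a ^ (p + 1)) / (p + 1) :=
    integral_rpow (Or.inl (by linarith))
  have hfc : ContinuousOn (fun t : ℝ => t ^ p) (Set.uIcc a (a + 1)) := fun t _ =>
    (Real.continuousAt_rpow_const t p (Or.inr hp0.le)).continuousWithinAt
  have hfi : IntervalIntegrable (fun t : ℝ => t ^ p) MeasureTheory.volume a (a + 1) :=
    hfc.intervalIntegrable
  constructor
  · -- chord below the function
    set A := a ^ p with hA
    set B := (a + 1) ^ p with hB
    have hchord : ∀ t ∈ Set.Icc a (a + 1), A + (B - A) * (t - a) ≤ t ^ p := by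
      intro t ht
      have ht0 : 0 < t := lt_of_lt_of_le ha ht.1
      have h1 := tangent_above (c := t) (t := a) hp0 hp1.le ht0 ha.le
      have h2 := tangent_above (c := t) (t := a + 1) hp0 hp1.le ht0 hb.le
      nlinarith [mul_le_mul_of_nonneg_left h1 (show (0:ℝ) ≤ (a + 1) - t by linarith [ht.2]),
        mul_le_mul_of_nonneg_left h2 (show (0:ℝ) ≤ t - a by linarith [ht.1])]
    have hlini : IntervalIntegrable (fun t : ℝ => A + (B - A) * (t - a))
        MeasureTheory.volume a (a + 1) :=
      ((continuous_const.add ((continuous_const.mul (continuous_id.sub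
        continuous_const))))).intervalIntegrable a (a + 1)
    have hmono := intervalIntegral.integral_mono_on hab hlini hfi hchord
    have hlin : (∫ t in a..(a + 1), (A + (B - A) * (t - a))) = (A + B) / 2 := by
      have hrw : (fun t : ℝ => A + (B - A) * (t - a)) =
          fun t : ℝ => (A - (B - A) * a) + (B - A) * t := by
        funext t; ring
      rw [hrw, intervalIntegral.integral_add (g := fun t : ℝ => (B - A) * t) (intervalIntegrable_const)
        (((continuous_const.mul continuous_id')).intervalIntegrable a (a + 1)),
        intervalIntegral.integral_const_mul, integral_id, intervalIntegral.integral_const]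
      simp only [smul_eq_mul]
      ring
    rw [hlin, hI] at hmono
    exact hmono
  · -- function below tangent at midpoint
    set m : ℝ := a + 1 / 2 with hm_def
    have hm : 0 < m := by positivity
    have htang : ∀ t ∈ Set.Icc a (a + 1),
        t ^ p ≤ m ^ p + p * (m ^ p / m) * (t - m) := fun t ht =>
      tangent_above hp0 hp1.le hm (le_trans ha.le ht.1)
    have hlini : IntervalIntegrable (fun t : ℝ => m ^ p + p * (m ^ p / m) * (t - m))
        MeasureTheory.volume a (a + 1) :=
      ((continuous_const.add ((continuous_const.mul (continuous_id.sub
        continuous_const))))).intervalIntegrable a (a + 1)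
    have hmono := intervalIntegral.integral_mono_on hab hfi hlini htang
    have hlin : (∫ t in a..(a + 1), (m ^ p + p * (m ^ p / m) * (t - m))) = m ^ p := by
      have hrw : (fun t : ℝ => m ^ p + p * (m ^ p / m) * (t - m)) =
          fun t : ℝ => (m ^ p - p * (m ^ p / m) * m) + (p * (m ^ p / m)) * t := by
        funext t; ring
      rw [hrw, intervalIntegral.integral_add (g := fun t : ℝ => (p * (m ^ p / m)) * t) (intervalIntegrable_const)
        (((continuous_const.mul continuous_id')).intervalIntegrable a (a + 1)),
        intervalIntegral.integral_const_mul, integral_id, intervalIntegral.integral_const]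
      simp only [smul_eq_mul, hm_def]
      ring
    rw [hlin, hI] at hmono
    have h1 := tangent_above (c := a) (t := m) hp0 hp1.le ha hm.le
    have h2 := tangent_above (c := a + 1) (t := m) hp0 hp1.le hb hm.le
    have e1 : m - a = 1 / 2 := by rw [hm_def]; ring
    have e2 : m - (a + 1) = -(1 / 2) := by rw [hm_def]; ring
    rw [e1] at h1
    rw [e2] at h2
    linarith [hmono, h1, h2]

/-- For `-1 < μ < 0` and `x > -1`, the regularised partial sums
`∑_{j=1}^k (x+j)^(-μ) - (x+k)^(1-μ)/(1-μ) - (1/2)(x+k)^(-μ)` converge to a finite limit. -/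
theorem gamma_root_side_converges_neg (μ x : ℝ) (hμ0 : -1 < μ) (hμ1 : μ < 0) (hx : -1 < x) :
    ∃ L : ℝ,
      Tendsto
        (fun k : ℕ =>
          (∑ j ∈ Finset.Icc 1 k, (x + (j : ℝ)) ^ (-μ)) -
            (x + (k : ℝ)) ^ (1 - μ) / (1 - μ) -
            (1 / 2) * (x + (k : ℝ)) ^ (-μ))
        atTop (nhds L) := by
  set f : ℕ → ℝ := fun k : ℕ =>
      (∑ j ∈ Finset.Icc 1 k, (x + (j : ℝ)) ^ (-μ)) -
        (x + (k : ℝ)) ^ (1 - μ) / (1 - μ) -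
        (1 / 2) * (x + (k : ℝ)) ^ (-μ) with hf
  have hp0 : (0:ℝ) < -μ := by linarith
  have hp1 : -μ < 1 := by linarith
  set G : ℝ → ℝ := fun a =>
      (a ^ (-μ) + (a + 1) ^ (-μ)) / 2 -
        ((a + 1) ^ (-μ + 1) - a ^ (-μ + 1)) / (-μ + 1) with hG
  have hstep : ∀ k : ℕ, f (k + 1) - f k = G (x + (k : ℝ)) := by
    intro k
    have hsum : (∑ j ∈ Finset.Icc 1 (k + 1), (x + (j : ℝ)) ^ (-μ)) =
        (∑ j ∈ Finset.Icc 1 k, (x + (j : ℝ)) ^ (-μ)) + (x + ((k : ℕ) + 1 : ℕ) : ℝ) ^ (-μ) := by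
      exact_mod_cast Finset.sum_Icc_succ_top (Nat.le_add_left 1 k) _
    have hc : ((k + 1 : ℕ) : ℝ) = (k : ℝ) + 1 := by push_cast; ring
    have h2 : (-μ + 1) = 1 - μ := by ring
    have hb : x + ((k:ℝ) + 1) = x + (k:ℝ) + 1 := by ring
    simp only [hf, hG, hsum, hc, h2, hb]
    ring
  have hpos : ∀ j : ℕ, (0:ℝ) < x + (j:ℝ) + 1 := by
    intro j
    have : (0:ℝ) ≤ (j:ℝ) := Nat.cast_nonneg j
    linarith
  set w : ℕ → ℝ := fun j => -μ * ((x + (j:ℝ) + 1) ^ (-μ) / (x + (j:ℝ) + 1)) with hw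
  have hwnonneg : ∀ j, 0 ≤ w j := fun j =>
    mul_nonneg hp0.le (div_nonneg (Real.rpow_nonneg (hpos j).le _) (hpos j).le)
  set g : ℕ → ℝ := fun n => f (n + 1) with hg
  have hkey : ∀ n : ℕ, g (n + 1) ≤ g n ∧ -((w n - w (n + 1)) / 4) ≤ g (n + 1) - g n := by
    intro n
    have ha := hpos n
    obtain ⟨hL, hU⟩ := step_bounds (p := -μ) (a := x + (n:ℝ) + 1) hp0 hp1 ha
    have hstepn := hstep (n + 1)
    have hcast : x + ((n + 1 : ℕ) : ℝ) = x + (n:ℝ) + 1 := by push_cast; ring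
    rw [hcast] at hstepn
    have hgd : g (n + 1) - g n = G (x + (n:ℝ) + 1) := by
      simp only [hg]; exact hstepn
    simp only [hG] at hgd
    have hw0 : w n = -μ * ((x + (n:ℝ) + 1) ^ (-μ) / (x + (n:ℝ) + 1)) := by
      simp only [hw]
    have hw1 : w (n + 1) = -μ * ((x + (n:ℝ) + 1 + 1) ^ (-μ) / (x + (n:ℝ) + 1 + 1)) := by
      have hcast2 : x + ((n + 1 : ℕ) : ℝ) + 1 = x + (n:ℝ) + 1 + 1 := by push_cast; ring
      simp only [hw, hcast2]
    constructor
    · rw [← sub_nonpos, hgd]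
      linarith [hL]
    · rw [hgd, hw0, hw1]
      linarith [hU]
  have hganti : Antitone g := antitone_nat_of_succ_le fun n => (hkey n).1
  have hlb : ∀ n, g 0 - w 0 / 4 ≤ g n := by
    intro n
    have h1 : ∑ i ∈ Finset.range n, (g (i + 1) - g i) = g n - g 0 := Finset.sum_range_sub g n
    have h3 : ∑ i ∈ Finset.range n, (-((w i - w (i + 1)) / 4)) ≤
        ∑ i ∈ Finset.range n, (g (i + 1) - g i) :=
      Finset.sum_le_sum fun i _ => (hkey i).2
    have h4 : ∑ i ∈ Finset.range n, (-((w i - w (i + 1)) / 4)) = (w n - w 0) / 4 := by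
      have he : ∀ i, -((w i - w (i + 1)) / 4) = (w (i + 1) - w i) / 4 := fun i => by ring
      simp_rw [he]
      rw [← Finset.sum_div, Finset.sum_range_sub w n]
    rw [h4, h1] at h3
    have := hwnonneg n
    linarith
  have hbdd : BddBelow (Set.range g) := ⟨g 0 - w 0 / 4, by rintro y ⟨n, rfl⟩; exact hlb n⟩
  refine ⟨⨅ n, g n, ?_⟩
  have hconv := tendsto_atTop_ciInf hganti hbdd
  exact (tendsto_add_atTop_iff_nat 1).mp hconv
end

section
/- For every real s₀ > 1 and every real μ with −1 < μ < 0, the sequence k ↦ ∑_{j=1}^k (s₀+2j)^{−μ} − (1/2)·(s₀+2k)^{1−μ}/(1−μ) − (1/2)·(s₀+2k)^{−μ} converges to a (finite real) limit as k → ∞. (This limit gives the regularised trivial-zero contribution r_T(s₀,μ) = e^{iπμ}·lim to the root side of the generalised root identities for ζ in the range −1 < μ < 0.) -/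
open Real Filter Finset

/-- For `s₀ > 1` and `-1 < μ < 0`, the regularised trivial-zero partial sums
`∑_{j=1}^k (s₀+2j)^(-μ) - (1/2)(s₀+2k)^(1-μ)/(1-μ) - (1/2)(s₀+2k)^(-μ)`
converge to a finite limit. -/
theorem zeta_trivial_root_side_converges_neg (s₀ μ : ℝ) (hs₀ : 1 < s₀)
    (hμ0 : -1 < μ) (hμ1 : μ < 0) :
    ∃ L : ℝ,
      Tendsto
        (fun k : ℕ =>
          (∑ j ∈ Finset.Icc 1 k, (s₀ + 2 * (j : ℝ)) ^ (-μ)) -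
            (1 / 2) * (s₀ + 2 * (k : ℝ)) ^ (1 - μ) / (1 - μ) -
            (1 / 2) * (s₀ + 2 * (k : ℝ)) ^ (-μ))
        atTop (nhds L) := by
  set f : ℝ → ℝ := fun x => (s₀ + 2 * x) ^ (-μ) with hf_def
  set g : ℝ → ℝ := fun x => 2 * (-μ) * (s₀ + 2 * x) ^ (-μ - 1) with hg_def
  set F : ℝ → ℝ := fun x => 1 / 2 * (s₀ + 2 * x) ^ (1 - μ) / (1 - μ) with hF_def
  have hb : ∀ x : ℝ, 0 ≤ x → 0 < s₀ + 2 * x := fun x hx => by linarith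
  -- derivative of f
  have hlinderiv : ∀ x : ℝ, HasDerivAt (fun x : ℝ => s₀ + 2 * x) 2 x := by
    intro x
    simpa using ((hasDerivAt_id x).const_mul 2).const_add s₀
  have hderivf : ∀ x : ℝ, 0 ≤ x → HasDerivAt f (g x) x := by
    intro x hx
    have h2 := (hlinderiv x).rpow_const (p := -μ) (Or.inl (hb x hx).ne')
    exact h2
  have hderivF : ∀ x : ℝ, 0 ≤ x → HasDerivAt F (f x) x := by
    intro x hx
    have h2 := (hlinderiv x).rpow_const (p := 1 - μ) (Or.inl (hb x hx).ne')
    have h3 := (h2.const_mul (1 / 2 : ℝ)).div_const (1 - μ)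
    have hval : f x = 1 / 2 * (2 * (1 - μ) * (s₀ + 2 * x) ^ (1 - μ - 1)) / (1 - μ) := by
      rw [show (1 : ℝ) - μ - 1 = -μ by ring]
      have h1μ : (1 : ℝ) - μ ≠ 0 := by linarith
      field_simp
      rfl
    rw [hval]
    exact h3
  have hcf : ∀ a b : ℝ, 0 ≤ a → ContinuousOn f (Set.Icc a b) := by
    intro a b ha x hx
    exact ((hderivf x (le_trans ha hx.1)).continuousAt).continuousWithinAt
  have hfint : ∀ n : ℝ, 0 ≤ n → IntervalIntegrable f MeasureTheory.volume n (n + 1) := by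
    intro n hn
    apply ContinuousOn.intervalIntegrable
    rw [Set.uIcc_of_le (by linarith)]
    exact hcf n (n + 1) hn
  -- MVT
  have hmvt : ∀ a b : ℝ, 0 ≤ a → a < b →
      ∃ c, a < c ∧ c < b ∧ f b - f a = g c * (b - a) := by
    intro a b ha hab
    obtain ⟨c, hc, hc'⟩ := exists_hasDerivAt_eq_slope f g hab (hcf a b ha)
      (fun x hx => hderivf x (le_trans ha hx.1.le))
    refine ⟨c, hc.1, hc.2, ?_⟩
    rw [hc', div_mul_cancel₀ _ (by linarith : b - a ≠ 0)]
  -- g is antitone and nonneg on [0,∞)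
  have hgmono : ∀ a b : ℝ, 0 ≤ a → a ≤ b → g b ≤ g a := by
    intro a b ha hab
    have h1 := Real.rpow_le_rpow_of_nonpos (hb a ha)
      (by linarith : s₀ + 2 * a ≤ s₀ + 2 * b) (by linarith : -μ - 1 ≤ 0)
    have h2 : (0 : ℝ) ≤ 2 * (-μ) := by linarith
    exact mul_le_mul_of_nonneg_left h1 h2
  have hg0 : ∀ x : ℝ, 0 ≤ x → 0 ≤ g x := by
    intro x hx
    exact mul_nonneg (by linarith) (Real.rpow_nonneg (hb x hx).le _)
  -- integral of a linear function
  have hlin : ∀ c d a b : ℝ,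
      (∫ x in a..b, (c + d * x)) = c * (b - a) + d * ((b ^ 2 - a ^ 2) / 2) := by
    intro c d a b
    have hid : IntervalIntegrable (fun x : ℝ => d * x) MeasureTheory.volume a b :=
      IntervalIntegrable.const_mul intervalIntegral.intervalIntegrable_id d
    rw [intervalIntegral.integral_add intervalIntegrable_const hid,
      intervalIntegral.integral_const,
      intervalIntegral.integral_const_mul, integral_id]
    simp [smul_eq_mul, mul_comm]
  -- FTC
  have hFTC : ∀ n : ℝ, 0 ≤ n → (∫ x in n..(n + 1), f x) = F (n + 1) - F n := by
    intro n hn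
    apply intervalIntegral.integral_eq_sub_of_hasDerivAt
    · intro x hx
      rw [Set.uIcc_of_le (by linarith)] at hx
      exact hderivF x (le_trans hn hx.1)
    · exact hfint n hn
  -- trapezoid lower bound
  have hTrap : ∀ n : ℝ, 0 ≤ n → (f n + f (n + 1)) / 2 ≤ F (n + 1) - F n := by
    intro n hn
    rw [← hFTC n hn]
    have hle : ∀ x ∈ Set.Icc n (n + 1),
        f n * ((n + 1) - x) + f (n + 1) * (x - n) ≤ f x := by
      intro x hx
      rcases eq_or_lt_of_le hx.1 with h1 | h1
      · rw [← h1, show n + 1 - n = (1 : ℝ) by ring, show n - n = (0 : ℝ) by ring]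
        simp
      rcases eq_or_lt_of_le hx.2 with h2 | h2
      · rw [h2, show n + 1 - (n + 1) = (0 : ℝ) by ring,
          show n + 1 - n = (1 : ℝ) by ring]
        simp
      obtain ⟨c₁, hc₁a, hc₁b, hc₁⟩ := hmvt n x hn h1
      obtain ⟨c₂, hc₂a, hc₂b, hc₂⟩ := hmvt x (n + 1) (by linarith) h2
      have hgc : g c₂ ≤ g c₁ := hgmono c₁ c₂ (by linarith) (by linarith)
      have key : 0 ≤ (x - n) * ((n + 1) - x) * (g c₁ - g c₂) :=
        mul_nonneg (mul_nonneg (by linarith) (by linarith)) (by linarith)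
      have e2 : f x - f n = g c₁ * (x - n) := hc₁
      have e3 : f (n + 1) - f x = g c₂ * ((n + 1) - x) := hc₂
      nlinarith [key, e2, e3]
    calc (f n + f (n + 1)) / 2
        = ∫ x in n..(n + 1), (f n * ((n + 1) - x) + f (n + 1) * (x - n)) := by
          rw [intervalIntegral.integral_congr
            (g := fun x => (f n * (n + 1) - f (n + 1) * n) + (f (n + 1) - f n) * x)
            (fun x _ => by ring), hlin]
          ring
      _ ≤ ∫ x in n..(n + 1), f x := by
          exact intervalIntegral.integral_mono_on (by linarith)
            (Continuous.intervalIntegrable (by fun_prop) n (n + 1)) (hfint n hn) hle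
    
  -- tangent upper bound
  have hTan : ∀ n : ℝ, 0 ≤ n → F (n + 1) - F n ≤ f n + g n / 2 := by
    intro n hn
    rw [← hFTC n hn]
    have hle : ∀ x ∈ Set.Icc n (n + 1), f x ≤ f n + g n * (x - n) := by
      intro x hx
      rcases eq_or_lt_of_le hx.1 with h1 | h1
      · rw [← h1]; simp
      obtain ⟨c, hca, hcb, hc⟩ := hmvt n x hn h1
      have hgc := hgmono n c hn hca.le
      nlinarith [hc, hx.1]
    calc (∫ x in n..(n + 1), f x)
        ≤ ∫ x in n..(n + 1), (f n + g n * (x - n)) := by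
          exact intervalIntegral.integral_mono_on (by linarith) (hfint n hn)
            (Continuous.intervalIntegrable (by fun_prop) n (n + 1)) hle
      _ = f n + g n / 2 := by
          rw [intervalIntegral.integral_congr
            (g := fun x => (f n - g n * n) + g n * x) (fun x _ => by ring), hlin]
          ring
  -- increment lower bound for f
  have hIncr : ∀ n : ℝ, 0 ≤ n → g (n + 1) ≤ f (n + 1) - f n := by
    intro n hn
    obtain ⟨c, hca, hcb, hc⟩ := hmvt n (n + 1) hn (by linarith)
    have hgc := hgmono c (n + 1) (by linarith) (by linarith)
    nlinarith [hc]
  -- the sequence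
  set A : ℕ → ℝ := fun k : ℕ =>
    (∑ j ∈ Finset.Icc 1 k, (s₀ + 2 * (j : ℝ)) ^ (-μ)) -
      1 / 2 * (s₀ + 2 * (k : ℝ)) ^ (1 - μ) / (1 - μ) -
      1 / 2 * (s₀ + 2 * (k : ℝ)) ^ (-μ) with hA_def
  have hstep : ∀ k : ℕ,
      A (k + 1) - A k =
        (f (k : ℝ) + f ((k : ℝ) + 1)) / 2 - (F ((k : ℝ) + 1) - F (k : ℝ)) := by
    intro k
    have hsum := Finset.sum_Icc_succ_top (by omega : 1 ≤ k + 1)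
      (fun j : ℕ => (s₀ + 2 * (j : ℝ)) ^ (-μ))
    simp only [hA_def, hf_def, hF_def, hsum]
    push_cast
    ring
  have hanti : Antitone A := by
    apply antitone_nat_of_succ_le
    intro k
    have h1 := hstep k
    have h2 := hTrap (k : ℝ) (Nat.cast_nonneg k)
    clear_value A f F g
    linarith
  have hlow : ∀ k : ℕ, A 0 + (g (k : ℝ) - g 0) / 2 ≤ A k := by
    intro k
    induction k with
    | zero => norm_num
    | succ k ih =>
      have h1 := hstep k
      have h2 := hTan (k : ℝ) (Nat.cast_nonneg k)
      have h3 := hIncr (k : ℝ) (Nat.cast_nonneg k)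
      have hcast : ((k + 1 : ℕ) : ℝ) = (k : ℝ) + 1 := by push_cast; ring
      rw [hcast]
      linarith
  have hbdd : BddBelow (Set.range A) := by
    refine ⟨A 0 - g 0 / 2, ?_⟩
    rintro x ⟨k, rfl⟩
    have h1 := hlow k
    have h2 := hg0 (k : ℝ) (Nat.cast_nonneg k)
    linarith
  exact ⟨_, tendsto_atTop_ciInf hanti hbdd⟩
end
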